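/- For all x,y ≥ 1, the number of distinct words B_ξ(x,y), as ξ ranges over all orderings of the Pascal graph with ξ(i,1)=ξ(1,j)=0 for all i,j ≥ 1, is exactly 2^{(x−1)(y−1)}. -/

import Mathlib

/-- Vertex reached after `n` moves: (number of `false` moves, number of `true` moves). -/
def vertexAt (γ : ℕ → Bool) (n : ℕ) : ℕ × ℕ :=
  (((Finset.range n).filter fun i => γ i = false).card,
   ((Finset.range n).filter fun i => γ i = true).card)

def childOf (v : ℕ × ℕ) (m : Bool) : ℕ × ℕ :=
  if m then (v.1, v.2 + 1) else (v.1 + 1, v.2)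

def MoveMin (ξ : ℕ × ℕ → Bool) (v : ℕ × ℕ) (m : Bool) : Prop :=
  (childOf v m).1 = 0 ∨ (childOf v m).2 = 0 ∨ m = !ξ (childOf v m)

def MoveMax (ξ : ℕ × ℕ → Bool) (v : ℕ × ℕ) (m : Bool) : Prop :=
  (childOf v m).1 = 0 ∨ (childOf v m).2 = 0 ∨ m = ξ (childOf v m)

def IsMinEdge (ξ : ℕ × ℕ → Bool) (γ : ℕ → Bool) (i : ℕ) : Prop :=
  MoveMin ξ (vertexAt γ i) (γ i)

def IsMaxEdge (ξ : ℕ × ℕ → Bool) (γ : ℕ → Bool) (i : ℕ) : Prop :=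
  MoveMax ξ (vertexAt γ i) (γ i)

def XMin (ξ : ℕ × ℕ → Bool) : Set (ℕ → Bool) := {γ | ∀ i, IsMinEdge ξ γ i}

def XMax (ξ : ℕ × ℕ → Bool) : Set (ℕ → Bool) := {γ | ∀ i, IsMaxEdge ξ γ i}

def XPrime (ξ : ℕ × ℕ → Bool) : Set (ℕ → Bool) :=
  {γ | ∃ δ ∈ XMin ξ ∪ XMax ξ, ∃ N : ℕ, ∀ n, N ≤ n → γ n = δ n}

/-- The all-ξ-minimal finite path (list of moves) from the root to a vertex. -/
def minPath (ξ : ℕ × ℕ → Bool) : ℕ × ℕ → List Bool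
  | (0, 0) => []
  | (x + 1, 0) => minPath ξ (x, 0) ++ [false]
  | (0, y + 1) => minPath ξ (0, y) ++ [true]
  | (x + 1, y + 1) =>
      if ξ (x + 1, y + 1) then minPath ξ (x, y + 1) ++ [false]
      else minPath ξ (x + 1, y) ++ [true]
  termination_by p => p.1 + p.2

/-- The all-ξ-maximal finite path (list of moves) from the root to a vertex. -/
def maxPath (ξ : ℕ × ℕ → Bool) : ℕ × ℕ → List Bool
  | (0, 0) => []
  | (x + 1, 0) => maxPath ξ (x, 0) ++ [false]
  | (0, y + 1) => maxPath ξ (0, y) ++ [true]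
  | (x + 1, y + 1) =>
      if ξ (x + 1, y + 1) then maxPath ξ (x + 1, y) ++ [true]
      else maxPath ξ (x, y + 1) ++ [false]
  termination_by p => p.1 + p.2

open Classical in
/-- The adic (Vershik) transformation determined by ξ (identity where undefined). -/
noncomputable def adicT (ξ : ℕ × ℕ → Bool) (γ : ℕ → Bool) : ℕ → Bool :=
  if h : ∃ i, ¬ IsMaxEdge ξ γ i then
    let i0 := Nat.find h
    let v := vertexAt γ (i0 + 1)
    let src : ℕ × ℕ := if ξ v then (v.1, v.2 - 1) else (v.1 - 1, v.2)
    fun n =>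
      if n < i0 then (minPath ξ src).getD n false
      else if n = i0 then ξ v
      else γ n
  else γ

open Classical in
/-- The inverse adic transformation determined by ξ (identity where undefined). -/
noncomputable def adicTInv (ξ : ℕ × ℕ → Bool) (γ : ℕ → Bool) : ℕ → Bool :=
  if h : ∃ i, ¬ IsMinEdge ξ γ i then
    let i0 := Nat.find h
    let v := vertexAt γ (i0 + 1)
    let src : ℕ × ℕ := if ξ v then (v.1 - 1, v.2) else (v.1, v.2 - 1)
    fun n =>
      if n < i0 then (maxPath ξ src).getD n false
      else if n = i0 then !ξ v
      else γ n
  else γ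

/-- ℤ-iterates of the adic transformation. -/
noncomputable def adicIter (ξ : ℕ × ℕ → Bool) : ℤ → (ℕ → Bool) → (ℕ → Bool)
  | Int.ofNat n, γ => (adicT ξ)^[n] γ
  | Int.negSucc n, γ => (adicTInv ξ)^[n + 1] γ

/-- The k-coding of the orbit of γ: symbols are the initial segments of length k. -/
noncomputable def omegaCode (ξ : ℕ × ℕ → Bool) (k : ℕ) (γ : ℕ → Bool) : ℤ → List Bool :=
  fun t => (List.range k).map (adicIter ξ t γ)

/-- Ordered list of all initial segments from the root to (x,y), in increasing ξ-order. -/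
def segList (ξ : ℕ × ℕ → Bool) : ℕ × ℕ → List (List Bool)
  | (0, 0) => [[]]
  | (x + 1, 0) => (segList ξ (x, 0)).map (· ++ [false])
  | (0, y + 1) => (segList ξ (0, y)).map (· ++ [true])
  | (x + 1, y + 1) =>
      if ξ (x + 1, y + 1) then
        (segList ξ (x, y + 1)).map (· ++ [false]) ++ (segList ξ (x + 1, y)).map (· ++ [true])
      else
        (segList ξ (x + 1, y)).map (· ++ [true]) ++ (segList ξ (x, y + 1)).map (· ++ [false])
  termination_by p => p.1 + p.2

/-- Level-k coded basic block at a vertex (x,y) with x+y ≥ k, a word over the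
alphabet of initial segments of length k. -/
def codedBlock (ξ : ℕ × ℕ → Bool) (k : ℕ) : ℕ × ℕ → List (List Bool)
  | (0, 0) => segList ξ (0, 0)
  | (x + 1, 0) => if x + 1 ≤ k then segList ξ (x + 1, 0) else [List.replicate k false]
  | (0, y + 1) => if y + 1 ≤ k then segList ξ (0, y + 1) else [List.replicate k true]
  | (x + 1, y + 1) =>
      if x + 1 + (y + 1) ≤ k then segList ξ (x + 1, y + 1)
      else if ξ (x + 1, y + 1) then codedBlock ξ k (x, y + 1) ++ codedBlock ξ k (x + 1, y)
      else codedBlock ξ k (x + 1, y) ++ codedBlock ξ k (x, y + 1)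
  termination_by p => p.1 + p.2

/-- Basic block over the alphabet {a,b}, with a = `false` and b = `true`. -/
def basicBlock (ξ : ℕ × ℕ → Bool) : ℕ × ℕ → List Bool
  | (0, 0) => []
  | (_ + 1, 0) => [false]
  | (0, _ + 1) => [true]
  | (x + 1, y + 1) =>
      if ξ (x + 1, y + 1) then basicBlock ξ (x, y + 1) ++ basicBlock ξ (x + 1, y)
      else basicBlock ξ (x + 1, y) ++ basicBlock ξ (x, y + 1)
  termination_by p => p.1 + p.2

/-- The finite word ω_s ω_{s+1} ... ω_{t-1}. -/
def wordAt (ω : ℤ → List Bool) (s t : ℤ) : List (List Bool) :=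
  (List.range (t - s).toNat).map fun u => ω (s + u)

/-- A ξ-consistent factoring scheme for ω ∈ 𝒫_k^ℤ: `cuts j` is the set of starting
positions of the blocks of the level-(k+j) factorization, and `vert j s` is the
vertex whose coded basic block is the block starting at the cut `s`. -/
def IsConsistentScheme (ξ : ℕ × ℕ → Bool) (k : ℕ) (ω : ℤ → List Bool)
    (cuts : ℕ → Set ℤ) (vert : ℕ → ℤ → ℕ × ℕ) : Prop :=
  (∀ j : ℕ, ∀ M : ℤ, ∃ s ∈ cuts j, s < M) ∧
  (∀ j : ℕ, ∀ M : ℤ, ∃ t ∈ cuts j, M < t) ∧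
  (∀ j : ℕ, ∀ s ∈ cuts j, ∀ t ∈ cuts j, s < t → (∀ u ∈ cuts j, ¬(s < u ∧ u < t)) →
      (vert j s).1 + (vert j s).2 = k + j ∧
      wordAt ω s t = codedBlock ξ k (vert j s)) ∧
  (∀ j : ℕ, cuts (j + 1) ⊆ cuts j) ∧
  (∀ j : ℕ, ∀ s ∈ cuts (j + 1), ∀ t ∈ cuts (j + 1), s < t →
      (∀ u ∈ cuts (j + 1), ¬(s < u ∧ u < t)) →
      ∀ x y : ℕ, vert (j + 1) s = (x + 1, y + 1) →
        ∃ m ∈ cuts j, s < m ∧ m < t ∧ (∀ u ∈ cuts j, s < u → u < t → u = m) ∧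
          (if ξ (x + 1, y + 1)
            then vert j s = (x, y + 1) ∧ vert j m = (x + 1, y)
            else vert j s = (x + 1, y) ∧ vert j m = (x, y + 1)))

/-- The natural factoring scheme of the k-coding of γ: a level-(k+j) block begins at
coordinate t exactly when T^t γ begins with an all-ξ-minimal path to its level-(k+j) vertex. -/
noncomputable def natCuts (ξ : ℕ × ℕ → Bool) (k : ℕ) (γ : ℕ → Bool) : ℕ → Set ℤ :=
  fun j => {t | ∀ i < k + j, IsMinEdge ξ (adicIter ξ t γ) i}

noncomputable def natVert (ξ : ℕ × ℕ → Bool) (k : ℕ) (γ : ℕ → Bool) : ℕ → ℤ → ℕ × ℕ :=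
  fun j t => vertexAt (adicIter ξ t γ) (k + j)

open Classical in
/-- The return time r_n of the Kink Lemma, where `g` is the move of γ leaving (i,j). -/
noncomputable def kinkReturn (ξ : ℕ × ℕ → Bool) (i j : ℕ) (g : Bool) : ℕ :=
  let n := i + j
  if MoveMax ξ (i, j) g ∧ MoveMin ξ (i, j) (!g) then n.choose j
  else if (MoveMin ξ (i, j) g ∧ MoveMin ξ (i, j) (!g) ∧ g = true) ∨
          (MoveMax ξ (i, j) g ∧ MoveMax ξ (i, j) (!g) ∧ g = false) then (n + 1).choose (j + 1)
  else if (MoveMin ξ (i, j) g ∧ MoveMin ξ (i, j) (!g) ∧ g = false) ∨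
          (MoveMax ξ (i, j) g ∧ MoveMax ξ (i, j) (!g) ∧ g = true) then (n + 1).choose j
  else (n + 1).choose j + n.choose (j + 1)

/-- Convert a length-k list of moves to a function `Fin k → Bool`. -/
def segFn (k : ℕ) (w : List Bool) : Fin k → Bool := fun idx => w.getD idx false

/-- The subshift Σ_k of the k-codings: sequences all of whose finite subblocks occur
in some level-k coded basic block. -/
def SigmaK (ξ : ℕ × ℕ → Bool) (k : ℕ) : Set (ℤ → (Fin k → Bool)) :=
  {ω | ∀ (s : ℤ) (l : ℕ), ∃ p : ℕ × ℕ,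
    ((List.range l).map fun u => ω (s + u)) <:+: (codedBlock ξ k p).map (segFn k)}

/-- The subshift Σ_ξ ⊆ {a,b}^ℤ of sequences all of whose finite subblocks occur in
some basic block B_ξ(x,y). -/
def SigmaXi (ξ : ℕ × ℕ → Bool) : Set (ℤ → Bool) :=
  {ω | ∀ (s : ℤ) (l : ℕ), ∃ p : ℕ × ℕ,
    ((List.range l).map fun u => ω (s + u)) <:+: basicBlock ξ p}

/-- The big subshift Σ: sequences all of whose finite subblocks occur in some basic
block B_ξ(x,y) for some ordering ξ. -/
def BigShift : Set (ℤ → Bool) :=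
  {ω | ∀ (s : ℤ) (l : ℕ), ∃ (ξ : ℕ × ℕ → Bool) (p : ℕ × ℕ),
    ((List.range l).map fun u => ω (s + u)) <:+: basicBlock ξ p}


variable {ξ η : ℕ × ℕ → Bool}

lemma bb1 : basicBlock ξ (0,0) = [] := by rw [basicBlock]
lemma bb2 (x : ℕ) : basicBlock ξ (x+1, 0) = [false] := by rw [basicBlock]
lemma bb3 (y : ℕ) : basicBlock ξ (0, y+1) = [true] := by rw [basicBlock]
lemma bb4 (x y : ℕ) : basicBlock ξ (x+1, y+1) =
    if ξ (x+1,y+1) then basicBlock ξ (x, y+1) ++ basicBlock ξ (x+1, y)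
    else basicBlock ξ (x+1, y) ++ basicBlock ξ (x, y+1) := by rw [basicBlock]

/-- crossing lemma -/
lemma cross {k : ℕ} {c : Bool} {u v : List Bool} (hu : u.getLast? = some (!c))
    (h : List.replicate k c <:+: u ++ v) :
    List.replicate k c <:+: u ∨ List.replicate k c <:+: v := by
  obtain ⟨s, t, hst⟩ := h
  by_cases h1 : s.length + k ≤ u.length
  · left
    have hp : s ++ List.replicate k c <+: u ++ v :=
      ⟨t, by simpa [List.append_assoc] using hst⟩
    have hp2 : s ++ List.replicate k c <+: u :=
      List.prefix_of_prefix_length_le hp (List.prefix_append u v)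
        (by simp; omega)
    exact (List.suffix_append s _).isInfix.trans hp2.isInfix
  by_cases h2 : u.length ≤ s.length
  · right
    have hus : u <+: s := by
      refine List.prefix_of_prefix_length_le (List.prefix_append u v)
        ⟨List.replicate k c ++ t, by rw [← hst]; simp⟩ h2
    obtain ⟨s', rfl⟩ := hus
    refine ⟨s', t, ?_⟩
    have : u ++ (s' ++ (List.replicate k c ++ t)) = u ++ v := by
      simpa [List.append_assoc] using hst
    have hv := List.append_cancel_left this
    simpa [List.append_assoc] using hv
  · exfalso
    push_neg at h1 h2
    have hul : 1 ≤ u.length := by omega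
    have hidx : u.length - 1 < (u ++ v).length := by simp; omega
    have e1 : (u ++ v)[u.length - 1]'hidx = !c := by
      rw [List.getElem_append_left (by omega)]
      have := @List.getLast?_eq_getElem? _ u
      rw [hu, List.getElem?_eq_getElem (by omega)] at this
      exact (Option.some_injective _ this.symm)
    have heq : u ++ v = s ++ (List.replicate k c ++ t) := by
      simpa [List.append_assoc] using hst.symm
    have e2 : (u ++ v)[u.length - 1]'hidx = c := by
      rw [List.getElem_of_eq heq, List.getElem_append_right (by omega),
        List.getElem_append_left (by simp; omega)]
      simp
    rw [e1] at e2
    simp at e2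

lemma cross' {k : ℕ} {c : Bool} {u v : List Bool} (hv : v.head? = some (!c))
    (h : List.replicate k c <:+: u ++ v) :
    List.replicate k c <:+: u ∨ List.replicate k c <:+: v := by
  have h' : List.replicate k c <:+: v.reverse ++ u.reverse := by
    rw [← List.reverse_replicate, ← List.reverse_append, List.reverse_infix]
    · exact h
  have hv' : v.reverse.getLast? = some (!c) := by rw [List.getLast?_reverse]; exact hv
  rcases cross hv' h' with h'' | h''
  · right; rw [← @List.reverse_replicate _ k c, List.reverse_infix] at h''; exact h''
  · left; rw [← @List.reverse_replicate _ k c, List.reverse_infix] at h''; exact h''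

section blocks

lemma bb_row (h1 : ∀ i, 1 ≤ i → ξ (i, 1) = false) : ∀ p, basicBlock ξ (p, 1) = List.replicate p false ++ [true] := by
  intro p
  induction p with
  | zero => rw [show (1:ℕ) = 0 + 1 from rfl, bb3]; simp
  | succ p ih =>
    rw [show (1:ℕ) = 0 + 1 from rfl, bb4, h1 (p+1) (by omega)]
    simp only [Bool.false_eq_true, if_false, bb2]
    rw [show (0:ℕ)+1 = 1 from rfl, ih, List.replicate_succ]
    simp

lemma bb_col (h2 : ∀ j, 1 ≤ j → ξ (1, j) = false) : ∀ q, basicBlock ξ (1, q) = false :: List.replicate q true := by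
  intro q
  induction q with
  | zero => rw [show (1:ℕ) = 0 + 1 from rfl, bb2]; simp
  | succ q ih =>
    rw [show (1:ℕ) = 0 + 1 from rfl, bb4, h2 (q+1) (by omega)]
    simp only [Bool.false_eq_true, if_false, bb3]
    rw [show (0:ℕ)+1 = 1 from rfl, ih, List.replicate_succ']
    simp

lemma bb_length : ∀ n p q, p + q = n → 1 ≤ p + q →
    (basicBlock ξ (p, q)).length = (p + q).choose q := by
  intro n
  induction n using Nat.strong_induction_on with
  | _ n IH =>
    intro p q hpq hn
    match p, q with
    | 0, 0 => omega
    | p+1, 0 => rw [bb2]; simp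
    | 0, q+1 => rw [bb3]; simp
    | p+1, q+1 =>
      rw [bb4]
      have l1 : (basicBlock ξ (p+1, q)).length = (p+1+q).choose q :=
        IH (p+1+q) (by omega) (p+1) q rfl (by omega)
      have l2 : (basicBlock ξ (p, q+1)).length = (p+(q+1)).choose (q+1) :=
        IH (p+(q+1)) (by omega) p (q+1) rfl (by omega)
      have hch : (p+1+(q+1)).choose (q+1) = (p+1+q).choose q + (p+(q+1)).choose (q+1) := by
        rw [show p+1+(q+1) = (p+1+q)+1 by ring, Nat.choose_succ_succ, show p+(q+1) = p+1+q by ring]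
      split <;> simp [List.length_append, l1, l2, hch] <;> omega

lemma bb_last (h1 : ∀ i, 1 ≤ i → ξ (i, 1) = false) : ∀ n p q, p + q = n → 1 ≤ q →
    (basicBlock ξ (p, q)).getLast? = some true := by
  intro n
  induction n using Nat.strong_induction_on with
  | _ n IH =>
    intro p q hpq hq
    match p, q with
    | 0, q+1 => rw [bb3]; simp
    | p+1, q+1 =>
      rw [bb4]
      by_cases hx : ξ (p+1, q+1)
      · have hq2 : 1 ≤ q := by
          by_contra hc
          have : q = 0 := by omega
          subst this
          rw [h1 (p+1) (by omega)] at hx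
          simp at hx
        rw [if_pos hx]
        have := IH (p+1+q) (by omega) (p+1) q rfl hq2
        rw [List.getLast?_append_of_ne_nil]
        · exact this
        · intro hnil; rw [hnil] at this; simp at this
      · rw [if_neg hx]
        have := IH (p+(q+1)) (by omega) p (q+1) rfl (by omega)
        rw [List.getLast?_append_of_ne_nil]
        · exact this
        · intro hnil; rw [hnil] at this; simp at this

lemma bb_head (h2 : ∀ j, 1 ≤ j → ξ (1, j) = false) : ∀ n p q, p + q = n → 1 ≤ p →
    (basicBlock ξ (p, q)).head? = some false := by
  intro n
  induction n using Nat.strong_induction_on with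
  | _ n IH =>
    intro p q hpq hp
    match p, q with
    | p+1, 0 => rw [bb2]; simp
    | p+1, q+1 =>
      rw [bb4]
      by_cases hx : ξ (p+1, q+1)
      · have hp2 : 1 ≤ p := by
          by_contra hc
          have : p = 0 := by omega
          subst this
          rw [h2 (q+1) (by omega)] at hx
          simp at hx
        rw [if_pos hx]
        have := IH (p+(q+1)) (by omega) p (q+1) rfl hp2
        rwa [List.head?_append_of_ne_nil]
        intro hnil; rw [hnil] at this; simp at this
      · rw [if_neg hx]
        have := IH (p+1+q) (by omega) (p+1) q rfl (by omega)
        rwa [List.head?_append_of_ne_nil]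
        intro hnil; rw [hnil] at this; simp at this
end blocks

lemma replicate_infix_weaken {k : ℕ} {c : Bool} {l : List Bool}
    (h : List.replicate (k+1) c <:+: l) : List.replicate k c <:+: l :=
  (List.IsPrefix.isInfix ⟨[c], List.replicate_succ'.symm⟩).trans h

lemma bb_norun_a (h1 : ∀ i, 1 ≤ i → ξ (i, 1) = false)
    (h2 : ∀ j, 1 ≤ j → ξ (1, j) = false) :
    ∀ n p q, p + q = n → ¬ (List.replicate (p+1) false <:+: basicBlock ξ (p, q)) := by
  intro n
  induction n using Nat.strong_induction_on with
  | _ n IH =>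
    intro p q hpq h
    match p, q with
    | 0, 0 =>
      rw [bb1] at h
      have := h.length_le; simp at this
    | p+1, 0 =>
      rw [bb2] at h
      have := h.length_le; simp at this
    | 0, q+1 =>
      rw [bb3] at h
      have := h.count_le false
      simp at this
    | p, 1 =>
      rw [bb_row h1] at h
      have := h.count_le false
      simp [List.count_replicate] at this
    | p+1, q+2 =>
      rw [bb4] at h
      by_cases hx : ξ (p+1, q+2)
      · rw [if_pos hx] at h
        have hp2 : 1 ≤ p := by
          by_contra hc
          have : p = 0 := by omega
          subst this
          rw [h2 (q+2) (by omega)] at hx; simp at hx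
        have hu : (basicBlock ξ (p, q+2)).getLast? = some (!false) := by
          simpa using bb_last h1 (p+(q+2)) p (q+2) rfl (by omega)
        rcases cross hu h with hc | hc
        · exact IH (p+(q+2)) (by omega) p (q+2) rfl (replicate_infix_weaken hc)
        · exact IH (p+1+(q+1)) (by omega) (p+1) (q+1) rfl hc
      · rw [if_neg hx] at h
        have hu : (basicBlock ξ (p+1, q+1)).getLast? = some (!false) := by
          simpa using bb_last h1 (p+1+(q+1)) (p+1) (q+1) rfl (by omega)
        rcases cross hu h with hc | hc
        · exact IH (p+1+(q+1)) (by omega) (p+1) (q+1) rfl hc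
        · exact IH (p+(q+2)) (by omega) p (q+2) rfl (replicate_infix_weaken hc)

lemma bb_norun_b (h1 : ∀ i, 1 ≤ i → ξ (i, 1) = false)
    (h2 : ∀ j, 1 ≤ j → ξ (1, j) = false) :
    ∀ n p q, p + q = n → 1 ≤ p → ¬ (List.replicate (q+1) true <:+: basicBlock ξ (p, q)) := by
  intro n
  induction n using Nat.strong_induction_on with
  | _ n IH =>
    intro p q hpq hp h
    match p, q with
    | p+1, 0 =>
      rw [bb2] at h
      have := h.count_le true
      simp at this
    | 1, q+1 =>
      rw [bb_col h2] at h
      have := h.count_le true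
      simp [List.count_replicate] at this
    | p+2, q+1 =>
      rw [bb4] at h
      by_cases hx : ξ (p+2, q+1)
      · rw [if_pos hx] at h
        have hq2 : 1 ≤ q := by
          by_contra hc
          have : q = 0 := by omega
          subst this
          rw [h1 (p+2) (by omega)] at hx; simp at hx
        have hv : (basicBlock ξ (p+2, q)).head? = some (!true) := by
          simpa using bb_head h2 (p+2+q) (p+2) q rfl (by omega)
        rcases cross' hv h with hc | hc
        · exact IH (p+1+(q+1)) (by omega) (p+1) (q+1) rfl (by omega) hc
        · exact IH (p+2+q) (by omega) (p+2) q rfl (by omega) (replicate_infix_weaken hc)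
      · rw [if_neg hx] at h
        have hv : (basicBlock ξ (p+1, q+1)).head? = some (!true) := by
          simpa using bb_head h2 (p+1+(q+1)) (p+1) (q+1) rfl (by omega)
        rcases cross' hv h with hc | hc
        · exact IH (p+2+q) (by omega) (p+2) q rfl (by omega) (replicate_infix_weaken hc)
        · exact IH (p+1+(q+1)) (by omega) (p+1) (q+1) rfl (by omega) hc

lemma bb_hasrun_a (h1 : ∀ i, 1 ≤ i → ξ (i, 1) = false) :
    ∀ q p, 1 ≤ q → List.replicate p false <:+: basicBlock ξ (p, q) := by
  intro q
  induction q with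
  | zero => omega
  | succ q ih =>
    intro p _
    match q, p with
    | 0, p => rw [bb_row h1]; exact (List.prefix_append _ _).isInfix
    | q+1, 0 => exact List.nil_infix
    | q+1, p+1 =>
      rw [bb4]
      have hin := ih (p+1) (by omega)
      by_cases hx : ξ (p+1, q+2)
      · rw [if_pos hx]
        exact hin.trans (List.suffix_append _ _).isInfix
      · rw [if_neg hx]
        exact hin.trans (List.prefix_append _ _).isInfix

lemma bb_hasrun_b (h2 : ∀ j, 1 ≤ j → ξ (1, j) = false) :
    ∀ p q, 1 ≤ p → List.replicate q true <:+: basicBlock ξ (p, q) := by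
  intro p
  induction p with
  | zero => omega
  | succ p ih =>
    intro q _
    match p, q with
    | 0, q =>
      rw [bb_col h2]
      exact (List.suffix_cons _ _).isInfix
    | p+1, 0 => exact List.nil_infix
    | p+1, q+1 =>
      rw [bb4]
      have hin := ih (q+1) (by omega)
      by_cases hx : ξ (p+2, q+1)
      · rw [if_pos hx]
        exact hin.trans (List.prefix_append _ _).isInfix
      · rw [if_neg hx]
        exact hin.trans (List.suffix_append _ _).isInfix

lemma key_aux (h1 : ∀ i, 1 ≤ i → ξ (i, 1) = false) (h2 : ∀ j, 1 ≤ j → ξ (1, j) = false)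
    (g1 : ∀ i, 1 ≤ i → η (i, 1) = false) (g2 : ∀ j, 1 ≤ j → η (1, j) = false)
    (a b : ℕ) (hξ : ξ (a+2, b+2) = false) (hη : η (a+2, b+2) = true)
    (hw : basicBlock ξ (a+2, b+2) = basicBlock η (a+2, b+2)) : False := by
  rw [show a+2 = (a+1)+1 from rfl, show b+2 = (b+1)+1 from rfl,
    bb4 (ξ := ξ) (a+1) (b+1), bb4 (ξ := η) (a+1) (b+1)] at hw
  rw [show (a+1)+1 = a+2 from rfl, show (b+1)+1 = b+2 from rfl, hξ, hη] at hw
  simp only [Bool.false_eq_true, if_false, if_true] at hw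
  -- hw : B_ξ(a+2, b+1) ++ B_ξ(a+1, b+2) = B_η(a+1, b+2) ++ B_η(a+2, b+1)
  have lA : (basicBlock ξ (a+2, b+1)).length = (a+b+3).choose (b+1) := by
    have := bb_length (ξ := ξ) (a+2+(b+1)) (a+2) (b+1) rfl (by omega)
    rw [this]; congr 1; omega
  have lC : (basicBlock η (a+1, b+2)).length = (a+b+3).choose (b+2) := by
    have := bb_length (ξ := η) (a+1+(b+2)) (a+1) (b+2) rfl (by omega)
    rw [this]; congr 1; omega
  have lB : (basicBlock ξ (a+1, b+2)).length = (a+b+3).choose (b+2) := by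
    have := bb_length (ξ := ξ) (a+1+(b+2)) (a+1) (b+2) rfl (by omega)
    rw [this]; congr 1; omega
  have lD : (basicBlock η (a+2, b+1)).length = (a+b+3).choose (b+1) := by
    have := bb_length (ξ := η) (a+2+(b+1)) (a+2) (b+1) rfl (by omega)
    rw [this]; congr 1; omega
  rcases le_or_gt b a with hba | hab
  · -- use a-runs: prefix comparison
    have hle : (a+b+3).choose (b+1) ≤ (a+b+3).choose (b+2) := by
      rcases Nat.lt_or_ge b a with hlt | hge
      · exact Nat.choose_le_succ_of_lt_half_left (by omega)
      · have hba' : b = a := by omega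
        subst hba'
        have := Nat.choose_symm (n := b+b+3) (k := b+2) (by omega)
        rw [show b+b+3-(b+2) = b+1 by omega] at this
        omega
    have hpre : basicBlock ξ (a+2, b+1) <+: basicBlock η (a+1, b+2) := by
      have p1 : basicBlock ξ (a+2, b+1) <+:
          basicBlock η (a+1, b+2) ++ basicBlock η (a+2, b+1) := ⟨basicBlock ξ (a+1, b+2), hw⟩
      have p2 : basicBlock η (a+1, b+2) <+:
          basicBlock η (a+1, b+2) ++ basicBlock η (a+2, b+1) := List.prefix_append _ _
      exact List.prefix_of_prefix_length_le p1 p2 (by omega)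
    have hrun : List.replicate (a+2) false <:+: basicBlock η (a+1, b+2) :=
      (bb_hasrun_a h1 (b+1) (a+2) (by omega)).trans hpre.isInfix
    exact bb_norun_a g1 g2 (a+1+(b+2)) (a+1) (b+2) rfl hrun
  · -- use b-runs: suffix comparison
    have hle : (a+b+3).choose (b+2) ≤ (a+b+3).choose (b+1) := by
      have e1 : (a+b+3).choose (b+2) = (a+b+3).choose (a+1) := by
        have := Nat.choose_symm (n := a+b+3) (k := b+2) (by omega)
        rw [show a+b+3-(b+2) = a+1 by omega] at this
        omega
      have e2 : (a+b+3).choose (b+1) = (a+b+3).choose (a+2) := by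
        have := Nat.choose_symm (n := a+b+3) (k := b+1) (by omega)
        rw [show a+b+3-(b+1) = a+2 by omega] at this
        omega
      rw [e1, e2]
      exact Nat.choose_le_succ_of_lt_half_left (by omega)
    have hsuf : basicBlock ξ (a+1, b+2) <:+ basicBlock η (a+2, b+1) := by
      have p1 : basicBlock ξ (a+1, b+2) <:+
          basicBlock η (a+1, b+2) ++ basicBlock η (a+2, b+1) := ⟨basicBlock ξ (a+2, b+1), hw⟩
      have p2 : basicBlock η (a+2, b+1) <:+
          basicBlock η (a+1, b+2) ++ basicBlock η (a+2, b+1) := List.suffix_append _ _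
      exact List.suffix_of_suffix_length_le p1 p2 (by omega)
    have hrun : List.replicate (b+2) true <:+: basicBlock η (a+2, b+1) :=
      (bb_hasrun_b h2 (a+1) (b+2) (by omega)).trans hsuf.isInfix
    exact bb_norun_b g1 g2 (a+2+(b+1)) (a+2) (b+1) rfl (by omega) hrun

lemma key (h1 : ∀ i, 1 ≤ i → ξ (i, 1) = false) (h2 : ∀ j, 1 ≤ j → ξ (1, j) = false)
    (g1 : ∀ i, 1 ≤ i → η (i, 1) = false) (g2 : ∀ j, 1 ≤ j → η (1, j) = false)
    {x y : ℕ} (hx : 2 ≤ x) (hy : 2 ≤ y)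
    (hw : basicBlock ξ (x, y) = basicBlock η (x, y)) : ξ (x, y) = η (x, y) := by
  obtain ⟨a, rfl⟩ : ∃ a, x = a + 2 := ⟨x - 2, by omega⟩
  obtain ⟨b, rfl⟩ : ∃ b, y = b + 2 := ⟨y - 2, by omega⟩
  by_contra hne
  rcases hξ : ξ (a+2, b+2) <;> rcases hη : η (a+2, b+2)
  · rw [hξ, hη] at hne; exact hne rfl
  · exact key_aux h1 h2 g1 g2 a b hξ hη hw
  · exact key_aux g1 g2 h1 h2 a b hη hξ hw.symm
  · rw [hξ, hη] at hne; exact hne rfl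

lemma agree (h1 : ∀ i, 1 ≤ i → ξ (i, 1) = false) (h2 : ∀ j, 1 ≤ j → ξ (1, j) = false)
    (g1 : ∀ i, 1 ≤ i → η (i, 1) = false) (g2 : ∀ j, 1 ≤ j → η (1, j) = false) :
    ∀ n x y, x + y ≤ n → 1 ≤ x → 1 ≤ y →
      basicBlock ξ (x, y) = basicBlock η (x, y) →
      ∀ i j, 1 ≤ i → i ≤ x → 1 ≤ j → j ≤ y → ξ (i, j) = η (i, j) := by
  intro n
  induction n using Nat.strong_induction_on with
  | _ n IH =>
    intro x y hn hx hy hw i j hi hix hj hjy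
    rcases Nat.lt_or_ge x 2 with hx2 | hx2
    · have : i = 1 := by omega
      subst this
      rw [h2 j hj, g2 j hj]
    rcases Nat.lt_or_ge y 2 with hy2 | hy2
    · have : j = 1 := by omega
      subst this
      rw [h1 i hi, g1 i hi]
    -- x, y ≥ 2
    have e := key h1 h2 g1 g2 hx2 hy2 hw
    obtain ⟨a, rfl⟩ : ∃ a, x = a + 2 := ⟨x - 2, by omega⟩
    obtain ⟨b, rfl⟩ : ∃ b, y = b + 2 := ⟨y - 2, by omega⟩
    rw [show a+2 = (a+1)+1 from rfl, show b+2 = (b+1)+1 from rfl,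
      bb4 (ξ := ξ) (a+1) (b+1), bb4 (ξ := η) (a+1) (b+1)] at hw
    rw [show (a+1)+1 = a+2 from rfl, show (b+1)+1 = b+2 from rfl, ← e] at hw
    have hlen : (basicBlock ξ (a+2, b+1)).length = (basicBlock η (a+2, b+1)).length := by
      rw [bb_length (ξ := ξ) (a+2+(b+1)) (a+2) (b+1) rfl (by omega),
        bb_length (ξ := η) (a+2+(b+1)) (a+2) (b+1) rfl (by omega)]
    have hlen' : (basicBlock ξ (a+1, b+2)).length = (basicBlock η (a+1, b+2)).length := by
      rw [bb_length (ξ := ξ) (a+1+(b+2)) (a+1) (b+2) rfl (by omega),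
        bb_length (ξ := η) (a+1+(b+2)) (a+1) (b+2) rfl (by omega)]
    have hparts : basicBlock ξ (a+2, b+1) = basicBlock η (a+2, b+1) ∧
        basicBlock ξ (a+1, b+2) = basicBlock η (a+1, b+2) := by
      by_cases hxv : ξ (a+2, b+2)
      · rw [if_pos hxv, if_pos hxv] at hw
        have := List.append_inj hw hlen'
        exact ⟨this.2, this.1⟩
      · rw [if_neg hxv, if_neg hxv] at hw
        exact List.append_inj hw hlen
    rcases Nat.lt_or_ge j (b+2) with hjb | hjb
    · exact IH (a+2+(b+1)) (by omega) (a+2) (b+1) (by omega) (by omega) (by omega)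
        hparts.1 i j hi hix hj (by omega)
    rcases Nat.lt_or_ge i (a+2) with hia | hia
    · exact IH (a+1+(b+2)) (by omega) (a+1) (b+2) (by omega) (by omega) (by omega)
        hparts.2 i j hi (by omega) hj hjy
    · have hi' : i = a+2 := by omega
      have hj' : j = b+2 := by omega
      subst hi'; subst hj'
      exact e

lemma dep : ∀ n x y, x + y ≤ n →
    (∀ i j, 1 ≤ i → i ≤ x → 1 ≤ j → j ≤ y → ξ (i, j) = η (i, j)) →
    basicBlock ξ (x, y) = basicBlock η (x, y) := by
  intro n
  induction n using Nat.strong_induction_on with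
  | _ n IH =>
    intro x y hn hag
    match x, y with
    | 0, 0 => rw [bb1, bb1]
    | x+1, 0 => rw [bb2, bb2]
    | 0, y+1 => rw [bb3, bb3]
    | x+1, y+1 =>
      rw [bb4, bb4, hag (x+1) (y+1) (by omega) (by omega) (by omega) (by omega)]
      have e1 : basicBlock ξ (x+1, y) = basicBlock η (x+1, y) :=
        IH (x+1+y) (by omega) (x+1) y (by omega)
          (fun i j hi hix hj hjy => hag i j hi hix hj (by omega))
      have e2 : basicBlock ξ (x, y+1) = basicBlock η (x, y+1) :=
        IH (x+(y+1)) (by omega) x (y+1) (by omega)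
          (fun i j hi hix hj hjy => hag i j hi (by omega) hj hjy)
      rw [e1, e2]

def extXi (x y : ℕ) (f : Fin (x-1) × Fin (y-1) → Bool) : ℕ × ℕ → Bool :=
  fun p => if h : 2 ≤ p.1 ∧ p.1 ≤ x ∧ 2 ≤ p.2 ∧ p.2 ≤ y then
    f (⟨p.1 - 2, by omega⟩, ⟨p.2 - 2, by omega⟩) else false

lemma extXi_cond1 (x y : ℕ) (f : Fin (x-1) × Fin (y-1) → Bool) :
    ∀ i, 1 ≤ i → extXi x y f (i, 1) = false := by
  intro i hi
  simp only [extXi]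
  rw [dif_neg]
  omega

lemma extXi_cond2 (x y : ℕ) (f : Fin (x-1) × Fin (y-1) → Bool) :
    ∀ j, 1 ≤ j → extXi x y f (1, j) = false := by
  intro j hj
  simp only [extXi]
  rw [dif_neg]
  omega

lemma extXi_spec (x y : ℕ) (f : Fin (x-1) × Fin (y-1) → Bool)
    (a : ℕ) (ha : a < x - 1) (b : ℕ) (hb : b < y - 1) :
    extXi x y f (a+2, b+2) = f (⟨a, ha⟩, ⟨b, hb⟩) := by
  simp only [extXi]
  rw [dif_pos (by omega)]
  congr 1


theorem stmt11 (x y : ℕ) (hx : 1 ≤ x) (hy : 1 ≤ y) :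
    Set.ncard {w : List Bool | ∃ ξ : ℕ × ℕ → Bool,
        (∀ i, 1 ≤ i → ξ (i, 1) = false) ∧ (∀ j, 1 ≤ j → ξ (1, j) = false) ∧
        w = basicBlock ξ (x, y)} = 2 ^ ((x - 1) * (y - 1)) := by
  classical
  have hset : {w : List Bool | ∃ ξ : ℕ × ℕ → Bool,
      (∀ i, 1 ≤ i → ξ (i, 1) = false) ∧ (∀ j, 1 ≤ j → ξ (1, j) = false) ∧
      w = basicBlock ξ (x, y)} =
      Set.range (fun f : Fin (x-1) × Fin (y-1) → Bool => basicBlock (extXi x y f) (x, y)) := by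
    ext w
    simp only [Set.mem_setOf_eq, Set.mem_range]
    constructor
    · rintro ⟨ξ, hξ1, hξ2, rfl⟩
      refine ⟨fun ab => ξ (ab.1.1 + 2, ab.2.1 + 2), ?_⟩
      apply dep (x + y) x y le_rfl
      intro i j hi hix hj hjy
      rcases Nat.lt_or_ge i 2 with hi2 | hi2
      · have : i = 1 := by omega
        subst this
        rw [extXi_cond2, hξ2 j hj]
        exact hj
      rcases Nat.lt_or_ge j 2 with hj2 | hj2
      · have : j = 1 := by omega
        subst this
        rw [extXi_cond1, hξ1 i hi]
        exact hi
      · obtain ⟨a, rfl⟩ : ∃ a, i = a + 2 := ⟨i - 2, by omega⟩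
        obtain ⟨b, rfl⟩ : ∃ b, j = b + 2 := ⟨j - 2, by omega⟩
        rw [extXi_spec x y _ a (by omega) b (by omega)]
    · rintro ⟨f, rfl⟩
      exact ⟨extXi x y f, extXi_cond1 x y f, extXi_cond2 x y f, rfl⟩
  have hinj : Function.Injective
      (fun f : Fin (x-1) × Fin (y-1) → Bool => basicBlock (extXi x y f) (x, y)) := by
    intro f g hfg
    simp only at hfg
    funext p
    obtain ⟨⟨a, ha⟩, ⟨b, hb⟩⟩ := p
    have := agree (extXi_cond1 x y f) (extXi_cond2 x y f)
      (extXi_cond1 x y g) (extXi_cond2 x y g) (x + y) x y le_rfl hx hy hfg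
      (a+2) (b+2) (by omega) (by omega) (by omega) (by omega)
    rw [extXi_spec x y f a ha b hb, extXi_spec x y g a ha b hb] at this
    exact this
  rw [hset, ← Set.image_univ, Set.ncard_image_of_injective _ hinj, Set.ncard_univ,
    Nat.card_eq_fintype_card, Fintype.card_fun]
  simp
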